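/- Let (A,a), (B,b) ∈ SA(2,ℤ) satisfy (A,a)·(B,b) = (I,x) for some x ∈ ℤ². Suppose A is a shear, let V ⊆ ℝ² be its unique one-dimensional eigenspace (the eigenspace for the eigenvalue 1), suppose x ∉ V, and let v be a nonzero vector in V. Then for every ε > 0 there exists a (possibly empty) product w of elements of {(A,a), (B,b)} such that (A,a)·w·(B,b) = (I,y) for some y ∈ ℤ² satisfying 1 − ⟨v, y⟩ / (‖v‖·‖y‖) < ε and such that y lies strictly on the same side of the line V as x. -/

import Mathlib

open scoped Matrix

abbrev SL2Z := Matrix.SpecialLinearGroup (Fin 2) ℤ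

/-- The special affine group `SA(2, ℤ) = ℤ² ⋊ SL(2, ℤ)`, as pairs `(A, a)`. -/
@[ext]
structure SA2 : Type where
  lin : SL2Z
  trans : Fin 2 → ℤ

namespace SA2

instance : Mul SA2 :=
  ⟨fun p q => ⟨p.lin * q.lin, (p.lin : Matrix (Fin 2) (Fin 2) ℤ) *ᵥ q.trans + p.trans⟩⟩

instance : One SA2 := ⟨⟨1, 0⟩⟩

instance : Inv SA2 :=
  ⟨fun p => ⟨p.lin⁻¹, -(((p.lin⁻¹ : SL2Z) : Matrix (Fin 2) (Fin 2) ℤ) *ᵥ p.trans)⟩⟩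

@[simp] lemma mul_lin (p q : SA2) : (p * q).lin = p.lin * q.lin := rfl
@[simp] lemma mul_trans (p q : SA2) :
    (p * q).trans = (p.lin : Matrix (Fin 2) (Fin 2) ℤ) *ᵥ q.trans + p.trans := rfl
@[simp] lemma one_lin : (1 : SA2).lin = 1 := rfl
@[simp] lemma one_trans : (1 : SA2).trans = 0 := rfl
@[simp] lemma inv_lin (p : SA2) : (p⁻¹).lin = p.lin⁻¹ := rfl
@[simp] lemma inv_trans (p : SA2) :
    (p⁻¹).trans = -(((p.lin⁻¹ : SL2Z) : Matrix (Fin 2) (Fin 2) ℤ) *ᵥ p.trans) := rfl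

instance : Group SA2 where
  mul_assoc a b c := by
    ext i
    · rw [mul_lin, mul_lin, mul_lin, mul_lin, mul_assoc]
    · simp only [mul_trans, mul_lin, Matrix.SpecialLinearGroup.coe_mul, Matrix.mulVec_add,
        Matrix.mulVec_mulVec, add_assoc]
  one_mul a := by
    ext i
    · simp
    · simp
  mul_one a := by
    ext i
    · simp
    · simp [Matrix.mulVec_zero]
  inv_mul_cancel a := by
    ext i
    · simp
    · simp only [mul_trans, inv_trans, inv_lin, Matrix.mulVec_neg, Matrix.mulVec_mulVec,
        ← Matrix.SpecialLinearGroup.coe_mul, mul_inv_cancel, Matrix.SpecialLinearGroup.coe_one,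
        Matrix.one_mulVec, add_neg_cancel, one_trans, Pi.zero_apply]

end SA2

/-- Standard inner product on `ℝ²`. -/
def ip (x y : Fin 2 → ℝ) : ℝ := x 0 * y 0 + x 1 * y 1

/-- Euclidean norm on `ℝ²`. -/
noncomputable def nrm (x : Fin 2 → ℝ) : ℝ := Real.sqrt (ip x x)

/-- An integer vector viewed as a real vector. -/
def toR (x : Fin 2 → ℤ) : Fin 2 → ℝ := fun i => (x i : ℝ)

/-- An integer matrix viewed as a real matrix. -/
def matR (M : Matrix (Fin 2) (Fin 2) ℤ) : Matrix (Fin 2) (Fin 2) ℝ :=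
  M.map (Int.cast : ℤ → ℝ)


namespace ShearAux

/-- cross product / determinant of two plane vectors -/
def cross (u w : Fin 2 → ℝ) : ℝ := u 0 * w 1 - u 1 * w 0

set_option linter.unnecessarySeqFocus false


lemma ip_self_nonneg (x : Fin 2 → ℝ) : 0 ≤ ip x x := by
  unfold ip; nlinarith [sq_nonneg (x 0), sq_nonneg (x 1)]

lemma nrm_mul_nrm_sq (u w : Fin 2 → ℝ) : (nrm u * nrm w)^2 = ip u u * ip w w := by
  unfold nrm
  rw [mul_pow, Real.sq_sqrt (ip_self_nonneg u), Real.sq_sqrt (ip_self_nonneg w)]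

lemma lagrange (u w : Fin 2 → ℝ) : ip u u * ip w w = (ip u w)^2 + (cross u w)^2 := by
  unfold ip cross; ring

lemma one_sub_cos_le (v y : Fin 2 → ℝ) (h : 0 < ip v y) :
    1 - ip v y / (nrm v * nrm y) ≤ (cross v y)^2 / (2 * (ip v y)^2) := by
  set S := nrm v * nrm y with hS
  have hS0 : 0 ≤ S := mul_nonneg (Real.sqrt_nonneg _) (Real.sqrt_nonneg _)
  have hsq : S^2 = (ip v y)^2 + (cross v y)^2 := by rw [hS, nrm_mul_nrm_sq, lagrange]
  have hSI : ip v y ≤ S := by nlinarith [sq_nonneg (cross v y)]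
  have hSpos : 0 < S := lt_of_lt_of_le h hSI
  have h1 : 1 - ip v y / S = (S - ip v y) / S := by field_simp
  rw [h1, div_le_div_iff₀ hSpos (by positivity)]
  nlinarith [mul_nonneg (mul_nonneg (sub_nonneg.2 hSI) (sub_nonneg.2 hSI))
    (by positivity : (0:ℝ) ≤ S + 2 * ip v y)]

lemma exists_smul_of_cross_eq_zero (w z : Fin 2 → ℝ) (hw : w ≠ 0) (h : cross w z = 0) :
    ∃ c : ℝ, z = c • w := by
  unfold cross at h
  have hw' : w 0 ≠ 0 ∨ w 1 ≠ 0 := by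
    by_contra hc
    push_neg at hc
    exact hw (funext fun i => by fin_cases i <;> simp [hc.1, hc.2])
  rcases hw' with h0 | h1
  · refine ⟨z 0 / w 0, funext fun i => ?_⟩
    fin_cases i <;> simp [Pi.smul_apply, smul_eq_mul] <;> field_simp <;> linarith
  · refine ⟨z 1 / w 1, funext fun i => ?_⟩
    fin_cases i <;> simp [Pi.smul_apply, smul_eq_mul] <;> field_simp <;> linarith

lemma cross_eq_zero_of_perp (nv w z : Fin 2 → ℝ) (hn : nv ≠ 0)
    (h1 : ip nv w = 0) (h2 : ip nv z = 0) : cross w z = 0 := by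
  unfold ip at h1 h2
  unfold cross
  have hn' : nv 0 ≠ 0 ∨ nv 1 ≠ 0 := by
    by_contra hc
    push_neg at hc
    exact hn (funext fun i => by fin_cases i <;> simp [hc.1, hc.2])
  rcases hn' with h0 | h0
  · have : nv 0 * (w 0 * z 1 - w 1 * z 0) = 0 := by linear_combination z 1 * h1 - w 1 * h2
    rcases mul_eq_zero.1 this with h | h
    · exact absurd h h0
    · linarith
  · have : nv 1 * (w 0 * z 1 - w 1 * z 0) = 0 := by linear_combination w 0 * h2 - z 0 * h1
    rcases mul_eq_zero.1 this with h | h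
    · exact absurd h h0
    · linarith


lemma pow_mul_pow (g h : SA2) (x : Fin 2 → ℤ) (hx : g * h = SA2.mk 1 x)
    (y : ℕ → Fin 2 → ℤ) (hy0 : y 0 = x)
    (hys : ∀ n, y (n + 1) = (g.lin : Matrix (Fin 2) (Fin 2) ℤ) *ᵥ y n + x) :
    ∀ n : ℕ, g ^ (n + 1) * h ^ (n + 1) = SA2.mk 1 (y n) := by
  have hlin : g.lin * h.lin = 1 := by
    have := congrArg SA2.lin hx; simpa using this
  have htr : (g.lin : Matrix (Fin 2) (Fin 2) ℤ) *ᵥ h.trans + g.trans = x := by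
    have := congrArg SA2.trans hx; simpa using this
  intro n
  induction n with
  | zero => simpa [hy0] using hx
  | succ n ih =>
      have e1 : g ^ (n + 2) * h ^ (n + 2) = g * (g ^ (n + 1) * h ^ (n + 1)) * h := by
        rw [pow_succ' g, pow_succ h]; group
      rw [e1, ih]
      show SA2.mk (g.lin * 1 * h.lin)
          (((g.lin * 1 : SL2Z) : Matrix (Fin 2) (Fin 2) ℤ) *ᵥ h.trans +
            ((g.lin : Matrix (Fin 2) (Fin 2) ℤ) *ᵥ y n + g.trans)) = SA2.mk 1 (y (n + 1))
      congr 1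
      · rw [mul_one, hlin]
      · rw [hys n, mul_one, ← htr]
        abel
  
end ShearAux

namespace ShearAux

lemma yseq_formula (M : Matrix (Fin 2) (Fin 2) ℤ) (x : Fin 2 → ℤ)
    (hN2 : (M - 1) *ᵥ ((M - 1) *ᵥ x) = 0)
    (y : ℕ → Fin 2 → ℤ) (hy0 : y 0 = x) (hys : ∀ n, y (n + 1) = M *ᵥ y n + x)
    (T : ℕ → ℤ) (hT0 : T 0 = 0) (hTs : ∀ n, T (n + 1) = T n + n + 1) :
    ∀ n : ℕ, y n = ((n : ℤ) + 1) • x + T n • ((M - 1) *ᵥ x) := by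
  intro n
  induction n with
  | zero => simp [hy0, hT0]
  | succ n ih =>
      have hM : ∀ w : Fin 2 → ℤ, M *ᵥ w = (M - 1) *ᵥ w + w := by
        intro w
        rw [Matrix.sub_mulVec, Matrix.one_mulVec]
        abel
      rw [hys n, ih, hM, hTs n]
      rw [Matrix.mulVec_add, Matrix.mulVec_smul, Matrix.mulVec_smul, hN2, smul_zero]
      push_cast
      module

lemma shear_sq (A : SL2Z) (htr : Matrix.trace (A : Matrix (Fin 2) (Fin 2) ℤ) = 2) :
    ((A : Matrix (Fin 2) (Fin 2) ℤ) - 1) * ((A : Matrix (Fin 2) (Fin 2) ℤ) - 1) = 0 := by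
  set MA := (A : Matrix (Fin 2) (Fin 2) ℤ) with hMA
  have hdet : MA.det = 1 := A.prop
  rw [Matrix.det_fin_two] at hdet
  rw [Matrix.trace_fin_two] at htr
  ext i j
  fin_cases i <;> fin_cases j <;>
    simp [Matrix.mul_apply, Fin.sum_univ_two, Matrix.sub_apply, Matrix.one_apply]
  all_goals first
    | linear_combination MA 0 0 * htr - hdet
    | linear_combination MA 0 1 * htr
    | linear_combination MA 1 0 * htr
    | linear_combination MA 1 1 * htr - hdet

lemma matR_mulVec (M : Matrix (Fin 2) (Fin 2) ℤ) (z : Fin 2 → ℤ) :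
    matR M *ᵥ toR z = toR (M *ᵥ z) := by
  funext i
  simp [matR, toR, Matrix.mulVec, dotProduct, Fin.sum_univ_two]

lemma toR_comb (m k : ℤ) (x u : Fin 2 → ℤ) :
    toR (m • x + k • u) = (m : ℝ) • toR x + (k : ℝ) • toR u := by
  funext i
  simp [toR]

lemma toR_eq_zero {z : Fin 2 → ℤ} (h : toR z = 0) : z = 0 := by
  funext i
  have := congrFun h i
  simpa [toR] using this

end ShearAux

namespace ShearAux

def Tseq : ℕ → ℤ
  | 0 => 0
  | n + 1 => Tseq n + n + 1

lemma Tseq_two : ∀ n : ℕ, 2 * Tseq n = n * (n + 1)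
  | 0 => by simp [Tseq]
  | n + 1 => by
      have ih := Tseq_two n
      simp only [Tseq]
      push_cast
      push_cast at ih
      ring_nf
      ring_nf at ih
      linarith

def yrec (M : Matrix (Fin 2) (Fin 2) ℤ) (x : Fin 2 → ℤ) : ℕ → Fin 2 → ℤ
  | 0 => x
  | n + 1 => M *ᵥ yrec M x n + x

lemma ip_comb (lam m K : ℝ) (v0 xR : Fin 2 → ℝ) :
    ip (lam • v0) (m • xR + K • v0) = lam * m * ip v0 xR + lam * K * ip v0 v0 := by
  simp [ip]; ring

lemma cross_comb (lam m K : ℝ) (v0 xR : Fin 2 → ℝ) :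
    cross (lam • v0) (m • xR + K • v0) = lam * m * cross v0 xR := by
  simp [cross]; ring

lemma ip_right_comb (nv : Fin 2 → ℝ) (m K : ℝ) (xR v0 : Fin 2 → ℝ) :
    ip nv (m • xR + K • v0) = m * ip nv xR + K * ip nv v0 := by
  simp [ip]; ring

end ShearAux

namespace ShearAux

lemma matR_sub_one (M : Matrix (Fin 2) (Fin 2) ℤ) : matR (M - 1) = matR M - 1 := by
  ext i j
  simp [matR, Matrix.sub_apply, Matrix.one_apply]

end ShearAux

set_option maxHeartbeats 1000000 in
open ShearAux in
/-- Let `(A,a)·(B,b) = (I,x)` in `SA(2,ℤ)`, with `A` a shear whose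
unique invariant line is `V = span {v₀}` (eigenvalue `1`), and `x ∉ V`.  Let `v` be a
nonzero vector of `V`.  Then for every `ε > 0` there is a word `w` over
`{(A,a),(B,b)}` with `(A,a)·w·(B,b) = (I,y)`, where `1 - ⟨v,y⟩/(‖v‖‖y‖) < ε` and `y`
lies strictly on the same side of the line `V` as `x` (tested against any nonzero
normal vector of `V`). -/
theorem shear_angle_limit
    (A B : SL2Z) (a b x : Fin 2 → ℤ)
    (hprod : SA2.mk A a * SA2.mk B b = SA2.mk 1 x)
    (hshear : Matrix.trace (A : Matrix (Fin 2) (Fin 2) ℤ) = 2 ∧ A ≠ 1)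
    (v0 : Fin 2 → ℝ) (hv0 : v0 ≠ 0)
    (heig : matR (A : Matrix (Fin 2) (Fin 2) ℤ) *ᵥ v0 = v0)
    (hxnot : toR x ∉ (Submodule.span ℝ ({v0} : Set (Fin 2 → ℝ)) : Set (Fin 2 → ℝ)))
    (v : Fin 2 → ℝ) (hv : v ≠ 0)
    (hvmem : v ∈ Submodule.span ℝ ({v0} : Set (Fin 2 → ℝ)))
    (ε : ℝ) (hε : 0 < ε) :
    ∃ w : List SA2, (∀ g ∈ w, g = SA2.mk A a ∨ g = SA2.mk B b) ∧
      ∃ y : Fin 2 → ℤ, SA2.mk A a * w.prod * SA2.mk B b = SA2.mk 1 y ∧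
        1 - ip v (toR y) / (nrm v * nrm (toR y)) < ε ∧
        ∀ n : Fin 2 → ℝ, n ≠ 0 → ip n v0 = 0 → 0 < ip n (toR y) * ip n (toR x) := by
  classical
  set MA := (A : Matrix (Fin 2) (Fin 2) ℤ) with hMAdef
  set MB := (B : Matrix (Fin 2) (Fin 2) ℤ) with hMBdef
  have hlin : A * B = 1 := by simpa using congrArg SA2.lin hprod
  have htrans : MA *ᵥ b + a = x := by simpa using congrArg SA2.trans hprod
  have hABm : MA * MB = 1 := by
    have := congrArg (fun M : SL2Z => (M : Matrix (Fin 2) (Fin 2) ℤ)) hlin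
    simpa using this
  have hBA : B * A = 1 := by
    rw [mul_eq_one_iff_eq_inv' ] at hlin
    rw [hlin, inv_mul_cancel]
  have hBAm : MB * MA = 1 := by
    have := congrArg (fun M : SL2Z => (M : Matrix (Fin 2) (Fin 2) ℤ)) hBA
    simpa using this
  set N := MA - 1 with hNdef
  have hN2 : N * N = 0 := shear_sq A hshear.1
  have hNN : ∀ z : Fin 2 → ℤ, N *ᵥ (N *ᵥ z) = 0 := by
    intro z
    rw [Matrix.mulVec_mulVec, hN2, Matrix.zero_mulVec]
  have hMAeq : MA = N + 1 := by rw [hNdef, sub_add_cancel]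
  have hMAN : MA * N = N := by
    rw [hMAeq, add_mul, one_mul, hN2, zero_add]
  have h1N : (1 - N) * MA = 1 := by
    have e : (1 - N) * (N + 1) = 1 - N * N := by noncomm_ring
    rw [hMAeq, e, hN2, sub_zero]
  have hMB : MB = 1 - N := by
    calc MB = 1 * MB := (one_mul _).symm
    _ = ((1 - N) * MA) * MB := by rw [h1N]
    _ = (1 - N) * (MA * MB) := by rw [mul_assoc]
    _ = 1 - N := by rw [hABm, mul_one]
  have hNMB : N * MB = N := by
    rw [hMB, mul_sub, mul_one, hN2, sub_zero]
  -- real side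
  have hNRv0 : matR N *ᵥ v0 = 0 := by
    rw [hNdef, matR_sub_one, Matrix.sub_mulVec, heig, Matrix.one_mulVec, sub_self]
  have hNne : N ≠ 0 := by
    intro h
    apply hshear.2
    have hMA1 : MA = 1 := by rwa [hNdef, sub_eq_zero] at h
    apply Subtype.coe_injective
    simpa using hMA1
  obtain ⟨i0, j0, hij0⟩ : ∃ i j, N i j ≠ 0 := by
    by_contra hcon
    push_neg at hcon
    exact hNne (by ext i j; simpa using hcon i j)
  set nrow : Fin 2 → ℝ := fun j => ((N i0 j : ℤ) : ℝ) with hnrowdef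
  have hnrow : nrow ≠ 0 := by
    intro h
    apply hij0
    have h2 := congrFun h j0
    simp only [hnrowdef, Pi.zero_apply] at h2
    exact_mod_cast h2
  have hrow_v0 : ip nrow v0 = 0 := by
    have h2 := congrFun hNRv0 i0
    simpa [Matrix.mulVec, dotProduct, Fin.sum_univ_two, ip, matR, hnrowdef] using h2
  have hperp : ∀ nv : Fin 2 → ℝ, nv ≠ 0 → ip nv v0 = 0 → ip nv (toR x) ≠ 0 := by
    intro nv hnv h0 hx0
    obtain ⟨c', hc'⟩ := exists_smul_of_cross_eq_zero v0 (toR x) hv0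
      (cross_eq_zero_of_perp nv v0 (toR x) hnv h0 hx0)
    exact hxnot (hc' ▸ Submodule.smul_mem _ c' (Submodule.mem_span_singleton_self v0))
  set u : Fin 2 → ℤ := N *ᵥ x with hudef
  have hrow_u : ip nrow (toR u) = 0 := by
    have h2 := congrFun (hNN x) i0
    simp only [Matrix.mulVec, dotProduct, Fin.sum_univ_two, Pi.zero_apply] at h2
    simp only [ip, hnrowdef, toR, hudef, Matrix.mulVec, dotProduct, Fin.sum_univ_two]
    exact_mod_cast h2
  obtain ⟨c, hc⟩ : ∃ c : ℝ, toR u = c • v0 :=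
    exists_smul_of_cross_eq_zero v0 (toR u) hv0
      (cross_eq_zero_of_perp nrow v0 (toR u) hnrow hrow_v0 hrow_u)
  have hu_ne : toR u ≠ 0 := by
    intro h
    have hu0 : u = 0 := toR_eq_zero h
    have hx00 : ip nrow (toR x) = 0 := by
      have h2 := congrFun hu0 i0
      simp only [hudef, Matrix.mulVec, dotProduct, Fin.sum_univ_two, Pi.zero_apply] at h2
      simp only [ip, hnrowdef, toR]
      exact_mod_cast h2
    exact hperp nrow hnrow hrow_v0 hx00
  have hcne : c ≠ 0 := by
    intro h
    exact hu_ne (by rw [hc, h, zero_smul])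
  obtain ⟨lam, hlam⟩ := Submodule.mem_span_singleton.1 hvmem
  have hlamne : lam ≠ 0 := by
    intro h
    rw [h, zero_smul] at hlam
    exact hv hlam.symm
  have hQ : 0 < ip v0 v0 := by
    have hv0' : v0 0 ≠ 0 ∨ v0 1 ≠ 0 := by
      by_contra hcon
      push_neg at hcon
      exact hv0 (funext fun i => by fin_cases i <;> simp [hcon.1, hcon.2])
    unfold ip
    rcases hv0' with h | h
    · nlinarith [mul_self_pos.mpr h, mul_self_nonneg (v0 1)]
    · nlinarith [mul_self_pos.mpr h, mul_self_nonneg (v0 0)]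
  -- choice of n and numeric bounds
  set P := ip v0 (toR x) with hPdef
  set D0 := cross v0 (toR x) with hD0def
  set G := Real.sqrt (lam^2 * D0^2 / (2*ε)) with hGdef
  have hGnn : 0 ≤ G := Real.sqrt_nonneg _
  have hG2 : 2 * ε * G^2 = lam^2 * D0^2 := by
    rw [hGdef, Real.sq_sqrt (by positivity)]
    field_simp
  set E := G + |lam| * |P| with hEdef
  have hE : 0 ≤ E := by rw [hEdef]; positivity
  set μ := |lam * c| * ip v0 v0 with hμdef
  have hμ : 0 < μ := mul_pos (abs_pos.2 (mul_ne_zero hlamne hcne)) hQ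
  obtain ⟨n0, hn0⟩ := exists_nat_gt (4 * E / μ)
  set n := n0 + 2 with hndef
  have hn2 : (2:ℝ) ≤ (n:ℝ) := by
    rw [hndef]; push_cast; linarith [Nat.cast_nonneg (α := ℝ) n0]
  have hngt : 4 * E < μ * ((n:ℝ)+1) := by
    rw [div_lt_iff₀ hμ] at hn0
    have hle : (n0:ℝ) ≤ (n:ℝ)+1 := by rw [hndef]; push_cast; linarith
    nlinarith [hμ]
  set TnR := ((Tseq n : ℤ) : ℝ) with hTnRdef
  have hTnR : 2 * TnR = (n:ℝ) * ((n:ℝ)+1) := by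
    rw [hTnRdef]
    exact_mod_cast congrArg (fun z : ℤ => (z:ℝ)) (Tseq_two n)
  have hbig : ((n:ℝ)+2) * E < μ * TnR := by
    have hnpos : (0:ℝ) < (n:ℝ) := by linarith
    have hμTn : 2 * (μ * TnR) = μ * ((n:ℝ) * ((n:ℝ)+1)) := by rw [← hTnR]; ring
    nlinarith [mul_pos (sub_pos.2 hngt) hnpos, mul_nonneg hE (by linarith : (0:ℝ) ≤ (n:ℝ) - 2)]
  -- the key analytic step
  have key : ∀ (y : Fin 2 → ℤ) (m k : ℤ),
      y = m • x + k • u → 1 ≤ (m:ℝ) → (m:ℝ) ≤ (n:ℝ) + 2 →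
      lam * ((k:ℝ) * c) = |lam * c| * TnR →
      (1 - ip v (toR y) / (nrm v * nrm (toR y)) < ε ∧
        ∀ nv : Fin 2 → ℝ, nv ≠ 0 → ip nv v0 = 0 →
          0 < ip nv (toR y) * ip nv (toR x)) := by
    intro y m k hy hm1 hm2 hsign
    have hyR : toR y = (m:ℝ) • toR x + ((k:ℝ) * c) • v0 := by
      rw [hy, toR_comb, hc, smul_smul]
    have hI0' : ip v (toR y) = lam * (m:ℝ) * P + lam * ((k:ℝ)*c) * ip v0 v0 := by
      rw [← hlam, hyR, ip_comb, hPdef]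
    have hlamK : lam * ((k:ℝ)*c) * ip v0 v0 = μ * TnR := by
      rw [hsign, hμdef]; ring
    have hI0big : (m:ℝ) * G < ip v (toR y) := by
      rw [hI0', hlamK]
      have h3 : (m:ℝ) * E ≤ ((n:ℝ)+2) * E := mul_le_mul_of_nonneg_right hm2 hE
      have h4 : (m:ℝ) * (G + |lam| * |P|) < μ * TnR := by
        rw [← hEdef]; exact lt_of_le_of_lt h3 hbig
      have h2 : 0 ≤ (m:ℝ) * (lam * P + |lam| * |P|) := by
        apply mul_nonneg (by linarith)
        have := neg_abs_le (lam * P)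
        rw [abs_mul] at this
        linarith
      rw [mul_add] at h4
      have h2' : 0 ≤ (m:ℝ) * (lam * P) + (m:ℝ) * (|lam| * |P|) := by
        rw [← mul_add]; exact h2
      linarith [h4, h2']
    have hmG : 0 ≤ (m:ℝ) * G := mul_nonneg (by linarith) hGnn
    have hI0pos : 0 < ip v (toR y) := lt_of_le_of_lt hmG hI0big
    constructor
    · refine lt_of_le_of_lt (one_sub_cos_le v (toR y) hI0pos) ?_
      rw [div_lt_iff₀ (by positivity)]
      have hcr : cross v (toR y) = lam * (m:ℝ) * D0 := by
        rw [← hlam, hyR, cross_comb, hD0def]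
      have h6 : (cross v (toR y))^2 = 2 * ε * ((m:ℝ) * G)^2 := by
        rw [hcr]
        have e : (lam * (m:ℝ) * D0)^2 = (m:ℝ)^2 * (lam^2 * D0^2) := by ring
        rw [e, ← hG2]; ring
      rw [h6]
      have hsq : (((m:ℝ)) * G)^2 < (ip v (toR y))^2 := by nlinarith [hI0big, hmG]
      nlinarith [mul_lt_mul_of_pos_left hsq (by positivity : (0:ℝ) < 2*ε)]
    · intro nv hnv h0
      have hipy : ip nv (toR y) = (m:ℝ) * ip nv (toR x) + ((k:ℝ)*c) * ip nv v0 := by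
        rw [hyR, ip_right_comb]
      rw [hipy, h0, mul_zero, add_zero]
      have hne := hperp nv hnv h0
      have hmpos : (0:ℝ) < (m:ℝ) := by linarith
      calc (0:ℝ) < (m:ℝ) * (ip nv (toR x) * ip nv (toR x)) :=
            mul_pos hmpos (mul_self_pos.2 hne)
      _ = (m:ℝ) * ip nv (toR x) * ip nv (toR x) := by ring
  -- now build the word, in two cases
  rcases (mul_ne_zero hlamne hcne).lt_or_gt with hneg | hpos
  · -- lam * c < 0 : use word h^(n+1) g^(n+1)
    have hprod' : SA2.mk B b * SA2.mk A a = SA2.mk 1 (MB *ᵥ a + b) := by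
      show SA2.mk (B * A) (MB *ᵥ a + b) = SA2.mk 1 (MB *ᵥ a + b)
      rw [hBA]
    set x' := MB *ᵥ a + b with hx'def
    have hx'x : x' = MB *ᵥ x := by
      rw [hx'def, ← htrans, Matrix.mulVec_add, Matrix.mulVec_mulVec, hBAm, Matrix.one_mulVec]
      abel
    have hMB1 : MB - 1 = -N := by rw [hMB]; abel
    have hN2' : (MB - 1) *ᵥ ((MB - 1) *ᵥ x') = 0 := by
      rw [hMB1, Matrix.neg_mulVec, Matrix.neg_mulVec, Matrix.mulVec_neg, neg_neg, hNN]
    have hY := yseq_formula MB x' hN2' (yrec MB x') rfl (fun _ => rfl) Tseq rfl (fun _ => rfl) n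
    have hNx' : (MB - 1) *ᵥ x' = -u := by
      rw [hMB1, hx'x, Matrix.neg_mulVec, Matrix.mulVec_mulVec, hNMB, ← hudef]
    have hMAx' : MA *ᵥ x' = x := by
      rw [hx'x, Matrix.mulVec_mulVec, hABm, Matrix.one_mulVec]
    have hMAu : MA *ᵥ u = u := by rw [hudef, Matrix.mulVec_mulVec, hMAN]
    refine ⟨List.replicate (n+1) (SA2.mk B b) ++ List.replicate (n+1) (SA2.mk A a), ?_, ?_⟩
    · intro g hg
      rcases List.mem_append.1 hg with h | h
      · exact Or.inr (List.eq_of_mem_replicate h)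
      · exact Or.inl (List.eq_of_mem_replicate h)
    · have hw : (List.replicate (n+1) (SA2.mk B b) ++ List.replicate (n+1) (SA2.mk A a)).prod
          = SA2.mk 1 (yrec MB x' n) := by
        rw [List.prod_append, List.prod_replicate, List.prod_replicate]
        exact pow_mul_pow (SA2.mk B b) (SA2.mk A a) x' hprod' (yrec MB x') rfl (fun _ => rfl) n
      set Y := yrec MB x' n with hYdef
      have hfin : SA2.mk A a * SA2.mk 1 Y * SA2.mk B b = SA2.mk 1 (x + MA *ᵥ Y) := by
        have e1 : SA2.mk A a * SA2.mk 1 Y = SA2.mk (A * 1) (MA *ᵥ Y + a) := rfl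
        have e2 : SA2.mk (A * 1) (MA *ᵥ Y + a) * SA2.mk B b
            = SA2.mk (A * 1 * B) (((A * 1 : SL2Z) : Matrix (Fin 2) (Fin 2) ℤ) *ᵥ b
              + (MA *ᵥ Y + a)) := rfl
        rw [e1, e2]
        congr 1
        · rw [mul_one, hlin]
        · have e3 : ((A * 1 : SL2Z) : Matrix (Fin 2) (Fin 2) ℤ) = MA := by
            rw [mul_one]
          rw [e3, ← htrans]
          abel
      have hyform : x + MA *ᵥ Y = ((n:ℤ)+2) • x + (-(Tseq n)) • u := by
        rw [hY, hNx', Matrix.mulVec_add, Matrix.mulVec_smul, Matrix.mulVec_smul,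
          hMAx', Matrix.mulVec_neg, hMAu]
        module
      have hk := key (x + MA *ᵥ Y) ((n:ℤ)+2) (-(Tseq n)) hyform
        (by push_cast; linarith) (by push_cast; linarith) ?_
      · refine ⟨x + MA *ᵥ Y, ?_, hk.1, hk.2⟩
        rw [hw]
        exact hfin
      · rw [abs_of_neg hneg]
        push_cast
        rw [hTnRdef]
        ring
  · -- 0 < lam * c : use word g^n h^n
    refine ⟨List.replicate n (SA2.mk A a) ++ List.replicate n (SA2.mk B b), ?_, ?_⟩
    · intro g hg
      rcases List.mem_append.1 hg with h | h
      · exact Or.inl (List.eq_of_mem_replicate h)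
      · exact Or.inr (List.eq_of_mem_replicate h)
    · have hw : SA2.mk A a * (List.replicate n (SA2.mk A a) ++ List.replicate n (SA2.mk B b)).prod
          * SA2.mk B b = SA2.mk 1 (yrec MA x n) := by
        rw [List.prod_append, List.prod_replicate, List.prod_replicate]
        have e : SA2.mk A a * (SA2.mk A a ^ n * SA2.mk B b ^ n) * SA2.mk B b
            = SA2.mk A a ^ (n+1) * SA2.mk B b ^ (n+1) := by
          rw [pow_succ' (SA2.mk A a) n, pow_succ (SA2.mk B b) n]
          simp only [mul_assoc]
        rw [e]
        exact pow_mul_pow (SA2.mk A a) (SA2.mk B b) x hprod (yrec MA x) rfl (fun _ => rfl) n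
      have hN2'' : (MA - 1) *ᵥ ((MA - 1) *ᵥ x) = 0 := hNN x
      have hyform : yrec MA x n = ((n:ℤ)+1) • x + (Tseq n) • u := by
        rw [yseq_formula MA x hN2'' (yrec MA x) rfl (fun _ => rfl) Tseq rfl (fun _ => rfl) n,
          hudef]
      have hk := key (yrec MA x n) ((n:ℤ)+1) (Tseq n) hyform
        (by push_cast; linarith) (by push_cast; linarith) ?_
      · exact ⟨yrec MA x n, hw, hk.1, hk.2⟩
      · rw [abs_of_pos hpos]
        rw [hTnRdef]
        ring
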